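/- For any weak composition s, the s-weak order on s-decreasing trees is a lattice, with join given by inv(T ∨ R) = tc(inv(T) ∪ inv(R)). -/

import Mathlib

/-- Planar rooted trees: leaves are unlabeled; internal nodes carry a natural
number label and an ordered list of children. -/
inductive STree : Type where
  | leaf : STree
  | node : ℕ → List STree → STree

namespace STree

mutual
  /-- `x` occurs as the label of an internal node of the tree. -/
  def mem (x : ℕ) : STree → Bool
    | .leaf => false
    | .node a cs => x == a || memL x cs
  def memL (x : ℕ) : List STree → Bool
    | [] => false
    | t :: ts => mem x t || memL x ts
end

mutual
  /-- The list of internal node labels, in preorder. -/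
  def labels : STree → List ℕ
    | .leaf => []
    | .node a cs => a :: labelsL cs
  def labelsL : List STree → List ℕ
    | [] => []
    | t :: ts => labels t ++ labelsL ts
end

mutual
  /-- Local well-formedness for the signature `s` : an internal node labeled `a`
  has `s a + 1` children, and all labels below it are smaller than `a`. -/
  def wf (s : ℕ → ℕ) : STree → Prop
    | .leaf => True
    | .node a cs => cs.length = s a + 1 ∧ (∀ b ∈ labelsL cs, b < a) ∧ wfL s cs
  def wfL (s : ℕ → ℕ) : List STree → Prop
    | [] => True
    | t :: ts => wf s t ∧ wfL s ts
end

/-- `T` is an `s`-decreasing tree: its internal nodes are labeled bijectively by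
`1, …, n`, node `i` has `s i + 1` ordered children, and all descendants of a node
have smaller labels. -/
def IsSDecreasingTree (n : ℕ) (s : ℕ → ℕ) (T : STree) : Prop :=
  wf s T ∧ (labels T).Perm (List.range' 1 n)

/-- Index of the first tree of the list containing the label `x`. -/
def idxOf (x : ℕ) : List STree → ℕ
  | [] => 0
  | t :: ts => if mem x t then 0 else idxOf x ts + 1

mutual
  /-- The cardinality `card_T(y,x)` of the pair `(y,x)` in the tree:
  `0` if `x` is (weakly) left of `y`, `i` if `x` lies in the `i`-th child
  subtree of `y`, and `s y` if `x` is right of `y`. -/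
  def card (s : ℕ → ℕ) (y x : ℕ) : STree → ℕ
    | .leaf => 0
    | .node a cs => if a = y then idxOf x cs else cardL s y x cs
  def cardL (s : ℕ → ℕ) (y x : ℕ) : List STree → ℕ
    | [] => 0
    | t :: ts =>
      if mem y t then
        (if mem x t then card s y x t else if memL x ts then s y else 0)
      else (if mem x t then 0 else cardL s y x ts)
end

/-- The tree-inversion multiset of `T`, as a multiplicity function on pairs
`(y,x)` with `1 ≤ x < y ≤ n`. -/
def treeInv (n : ℕ) (s : ℕ → ℕ) (T : STree) : ℕ → ℕ → ℕ := fun y x =>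
  if 1 ≤ x ∧ x < y ∧ y ≤ n then card s y x T else 0

/-- A multi inversion set on `1, …, n` bounded by the weak composition `s`. -/
def IsMultiInvSet (n : ℕ) (s : ℕ → ℕ) (I : ℕ → ℕ → ℕ) : Prop :=
  (∀ y x, I y x ≤ s y) ∧ ∀ y x, ¬(1 ≤ x ∧ x < y ∧ y ≤ n) → I y x = 0

/-- Transitivity: for `a < b < c`, `card(c,b) = i` implies `card(b,a) = 0` or
`card(c,a) ≥ i`. -/
def InvTransitive (I : ℕ → ℕ → ℕ) : Prop :=
  ∀ a b c : ℕ, a < b → b < c → I b a = 0 ∨ I c b ≤ I c a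

/-- Planarity: for `a < b < c`, `card(c,a) = i` implies `card(b,a) = s b` or
`card(c,b) ≥ i`. -/
def InvPlanar (s : ℕ → ℕ) (I : ℕ → ℕ → ℕ) : Prop :=
  ∀ a b c : ℕ, a < b → b < c → I b a = s b ∨ I c a ≤ I c b

/-- An `s`-tree-inversion set: a bounded multi inversion set that is transitive
and planar. -/
def IsTreeInvSet (n : ℕ) (s : ℕ → ℕ) (I : ℕ → ℕ → ℕ) : Prop :=
  IsMultiInvSet n s I ∧ InvTransitive I ∧ InvPlanar s I

/-- Inclusion of multi inversion sets: pointwise comparison of multiplicities. -/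
def invLE (I J : ℕ → ℕ → ℕ) : Prop := ∀ y x, I y x ≤ J y x

/-- The `s`-weak order: inclusion of tree-inversion multisets. -/
def sWeakLE (n : ℕ) (s : ℕ → ℕ) (T R : STree) : Prop :=
  invLE (treeInv n s T) (treeInv n s R)

/-- Union of multi inversion sets: pointwise maximum. -/
def invUnion (I J : ℕ → ℕ → ℕ) : ℕ → ℕ → ℕ := fun y x => max (I y x) (J y x)

/-- Transitive closure: `tc I (c,a)` is the maximal value of `I (b₁, b₂)` over
all transitivity paths `c = b₁ > b₂ > … > b_k = a` (consecutive entries have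
positive multiplicity). -/
noncomputable def tc (I : ℕ → ℕ → ℕ) : ℕ → ℕ → ℕ := fun c a =>
  sSup {v | ∃ (b : ℕ) (l : List ℕ),
    List.Chain (fun u w => w < u ∧ 0 < I u w) c (b :: l) ∧
    (b :: l).getLast (List.cons_ne_nil b l) = a ∧ v = I c b}

/-- Adding the inversion `(c,a)`: increase its multiplicity by one. -/
def addInv (I : ℕ → ℕ → ℕ) (c a : ℕ) : ℕ → ℕ → ℕ := fun y x =>
  if y = c ∧ x = a then I y x + 1 else I y x

mutual
  /-- `a` is a (proper) descendant of the node labeled `c`. -/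
  def descIn (c a : ℕ) : STree → Bool
    | .leaf => false
    | .node b cs => (b == c && memL a cs) || descInL c a cs
  def descInL (c a : ℕ) : List STree → Bool
    | [] => false
    | t :: ts => descIn c a t || descInL c a ts
end

mutual
  /-- `a` belongs to the rightmost child subtree of the node labeled `c`. -/
  def inRight (c a : ℕ) : STree → Bool
    | .leaf => false
    | .node b cs =>
      (b == c && (match cs.getLast? with
        | some t => mem a t
        | none => false)) || inRightL c a cs
  def inRightL (c a : ℕ) : List STree → Bool
    | [] => false
    | t :: ts => inRight c a t || inRightL c a ts
end

mutual
  /-- `a` belongs to the leftmost child subtree of the node labeled `c`. -/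
  def inLeft (c a : ℕ) : STree → Bool
    | .leaf => false
    | .node b cs =>
      (b == c && (match cs.head? with
        | some t => mem a t
        | none => false)) || inLeftL c a cs
  def inLeftL (c a : ℕ) : List STree → Bool
    | [] => false
    | t :: ts => inLeft c a t || inLeftL c a ts
end

mutual
  /-- The rightmost child subtree of the node labeled `a` is empty (a leaf). -/
  def rightEmpty (a : ℕ) : STree → Bool
    | .leaf => false
    | .node b cs =>
      (b == a && (match cs.getLast? with
        | some .leaf => true
        | _ => false)) || rightEmptyL a cs
  def rightEmptyL (a : ℕ) : List STree → Bool
    | [] => false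
    | t :: ts => rightEmpty a t || rightEmptyL a ts
end

/-- `(a,c)` is a tree-ascent of `T`: `a` is a descendant of `c`, not in the
rightmost subtree of `c`; `a` lies in the rightmost subtree of any `b` with
`a < b < c` having `a` as a descendant; and if `s a > 0` the rightmost
(strict right) subtree of `a` is empty. -/
def IsTreeAscent (s : ℕ → ℕ) (T : STree) (a c : ℕ) : Prop :=
  a < c ∧ descIn c a T = true ∧ inRight c a T = false ∧
  (∀ b : ℕ, a < b → b < c → descIn b a T = true → inRight b a T = true) ∧
  (0 < s a → rightEmpty a T = true)

/-- `a` is the root label of the tree. -/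
def hasRoot (a : ℕ) : STree → Bool
  | .leaf => false
  | .node b _ => a == b

mutual
  /-- `a` is a direct child of the node `c`, but not its rightmost child. -/
  def nonRightChild (c a : ℕ) : STree → Bool
    | .leaf => false
    | .node b cs => (b == c && cs.dropLast.any (hasRoot a)) || nonRightChildL c a cs
  def nonRightChildL (c a : ℕ) : List STree → Bool
    | [] => false
    | t :: ts => nonRightChild c a t || nonRightChildL c a ts
end

/-- `(a,c)` is a Tamari-ascent of `T`: `a` is a non-right child of `c`. -/
def IsTamariAscent (T : STree) (a c : ℕ) : Prop :=
  a < c ∧ nonRightChild c a T = true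

mutual
  /-- Horizontal mirror image of a tree: the order of children is reversed at
  every internal node. -/
  def mirror : STree → STree
    | .leaf => .leaf
    | .node a cs => .node a (mirrorL cs)
  def mirrorL : List STree → List STree
    | [] => []
    | t :: ts => mirrorL ts ++ [mirror t]
end

/-- `T` is an `s`-Tamari tree: `card(c,a) ≤ card(c,b)` for all `a < b < c`. -/
def TamariProp (n : ℕ) (s : ℕ → ℕ) (T : STree) : Prop :=
  ∀ a b c : ℕ, a < b → b < c → treeInv n s T c a ≤ treeInv n s T c b

/-- `T` is an `s`-maximal-Tamari tree: `card(b,a) = s b` implies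
`card(c,a) = s c` for all `c > b`. -/
def MaxTamariProp (n : ℕ) (s : ℕ → ℕ) (T : STree) : Prop :=
  ∀ a b c : ℕ, 1 ≤ a → a < b → b < c → c ≤ n →
    treeInv n s T b a = s b → treeInv n s T c a = s c

/-- The projection `π↓` on inversion sets:
`card_Q(c,a) = min { card_T(c,b) : a ≤ b < c }`. -/
noncomputable def pidownInv (n : ℕ) (s : ℕ → ℕ) (T : STree) : ℕ → ℕ → ℕ :=
  fun c a => sInf {v | ∃ b : ℕ, a ≤ b ∧ b < c ∧ v = treeInv n s T c b}

open scoped Classical in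
/-- The projection `π↑` on inversion sets: `card_R(c,a) = s c` if there is
`a < b < c` with `card_T(b,a) = s b`, and `card_R(c,a) = card_T(c,a)` otherwise. -/
noncomputable def piupInv (n : ℕ) (s : ℕ → ℕ) (T : STree) : ℕ → ℕ → ℕ :=
  fun c a =>
    if 1 ≤ a ∧ a < c ∧ c ≤ n then
      if ∃ b : ℕ, a < b ∧ b < c ∧ treeInv n s T b a = s b then s c
      else treeInv n s T c a
    else 0

end STree

namespace STree

/-! ### Basic lemmas -/

theorem mem_leaf (x : ℕ) : mem x .leaf = false := by simp [mem]
theorem mem_node (x a : ℕ) (cs : List STree) :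
    mem x (.node a cs) = (x == a || memL x cs) := by simp [mem]
theorem memL_nil (x : ℕ) : memL x [] = false := by simp [memL]
theorem memL_cons (x : ℕ) (t : STree) (ts : List STree) :
    memL x (t :: ts) = (mem x t || memL x ts) := by simp [memL]

theorem labels_leaf : labels .leaf = [] := by simp [labels]
theorem labels_node (a : ℕ) (cs : List STree) :
    labels (.node a cs) = a :: labelsL cs := by simp [labels]
theorem labelsL_nil : labelsL [] = [] := by simp [labelsL]
theorem labelsL_cons (t : STree) (ts : List STree) :
    labelsL (t :: ts) = labels t ++ labelsL ts := by simp [labelsL]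

mutual
theorem mem_iff (x : ℕ) : ∀ t : STree, (mem x t = true ↔ x ∈ labels t)
  | .leaf => by simp [mem_leaf, labels_leaf]
  | .node a cs => by
      rw [mem_node, labels_node, Bool.or_eq_true, beq_iff_eq, memL_iff x cs,
        List.mem_cons]
theorem memL_iff (x : ℕ) : ∀ cs : List STree, (memL x cs = true ↔ x ∈ labelsL cs)
  | [] => by simp [memL_nil, labelsL_nil]
  | t :: ts => by
      rw [memL_cons, labelsL_cons]
      simp [mem_iff x t, memL_iff x ts]
end

end STree

namespace STree

theorem card_leaf (s : ℕ → ℕ) (y x : ℕ) : card s y x .leaf = 0 := by simp [card]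
theorem card_node (s : ℕ → ℕ) (y x a : ℕ) (cs : List STree) :
    card s y x (.node a cs) = if a = y then idxOf x cs else cardL s y x cs := by
  simp [card]
theorem cardL_nil (s : ℕ → ℕ) (y x : ℕ) : cardL s y x [] = 0 := by simp [cardL]
theorem cardL_cons (s : ℕ → ℕ) (y x : ℕ) (t : STree) (ts : List STree) :
    cardL s y x (t :: ts) =
      if mem y t then
        (if mem x t then card s y x t else if memL x ts then s y else 0)
      else (if mem x t then 0 else cardL s y x ts) := by
  simp [cardL]

theorem idxOf_cons (x : ℕ) (t : STree) (ts : List STree) :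
    idxOf x (t :: ts) = if mem x t then 0 else idxOf x ts + 1 := by simp [idxOf]

theorem idxOf_lt_length (x : ℕ) : ∀ cs : List STree, memL x cs = true →
    idxOf x cs < cs.length
  | t :: ts, h => by
    rw [memL_cons, Bool.or_eq_true] at h
    rw [idxOf_cons]
    cases ht : mem x t with
    | true => simp
    | false =>
      have h' : memL x ts = true := by simpa [ht] using h
      simp only [ht, Bool.false_eq_true, if_false, List.length_cons]
      exact Nat.succ_lt_succ (idxOf_lt_length x ts h')

theorem wfL_iff (s : ℕ → ℕ) : ∀ cs : List STree, wfL s cs ↔ ∀ t ∈ cs, wf s t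
  | [] => by simp [wfL]
  | t :: ts => by simp [wfL, wfL_iff s ts]

theorem cardL_of_not_memy (s : ℕ → ℕ) (y x : ℕ) :
    ∀ cs : List STree, memL y cs = false → cardL s y x cs = 0
  | [], _ => cardL_nil s y x
  | t :: ts, h => by
    rw [memL_cons] at h
    rcases Bool.or_eq_false_iff.mp h with ⟨h1, h2⟩
    rw [cardL_cons]
    simp only [h1, Bool.false_eq_true, if_false]
    split
    · rfl
    · exact cardL_of_not_memy s y x ts h2

theorem cardL_of_not_memx (s : ℕ → ℕ) (y x : ℕ) :
    ∀ cs : List STree, memL x cs = false → cardL s y x cs = 0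
  | [], _ => cardL_nil s y x
  | t :: ts, h => by
    rw [memL_cons] at h
    rcases Bool.or_eq_false_iff.mp h with ⟨h1, h2⟩
    rw [cardL_cons]
    simp only [h1, h2, Bool.false_eq_true, if_false]
    split
    · rfl
    · exact cardL_of_not_memx s y x ts h2

theorem cardL_of_lt (s : ℕ → ℕ) (y x : ℕ) :
    ∀ cs : List STree, memL x cs = true → idxOf x cs < idxOf y cs →
      cardL s y x cs = 0
  | t :: ts, hx, hlt => by
    rw [memL_cons, Bool.or_eq_true] at hx
    rw [idxOf_cons, idxOf_cons] at hlt
    rw [cardL_cons]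
    cases hxt : mem x t with
    | true =>
      cases hyt : mem y t with
      | true => simp [hxt, hyt] at hlt
      | false => simp [hxt, hyt]
    | false =>
      have hx' : memL x ts = true := by simpa [hxt] using hx
      cases hyt : mem y t with
      | true => simp [hxt, hyt] at hlt
      | false =>
        simp only [hxt, hyt, Bool.false_eq_true, if_false] at hlt ⊢
        exact cardL_of_lt s y x ts hx' (by omega)

theorem cardL_of_gt (s : ℕ → ℕ) (y x : ℕ) :
    ∀ cs : List STree, memL y cs = true → memL x cs = true →
      idxOf y cs < idxOf x cs → cardL s y x cs = s y
  | t :: ts, hy, hx, hlt => by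
    rw [memL_cons, Bool.or_eq_true] at hy hx
    rw [idxOf_cons, idxOf_cons] at hlt
    rw [cardL_cons]
    cases hyt : mem y t with
    | true =>
      cases hxt : mem x t with
      | true => simp [hxt, hyt] at hlt
      | false =>
        have hx' : memL x ts = true := by simpa [hxt] using hx
        simp [hxt, hyt, hx']
    | false =>
      have hy' : memL y ts = true := by simpa [hyt] using hy
      cases hxt : mem x t with
      | true => simp [hxt, hyt] at hlt
      | false =>
        have hx' : memL x ts = true := by simpa [hxt] using hx
        simp only [hxt, hyt, Bool.false_eq_true, if_false] at hlt ⊢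
        exact cardL_of_gt s y x ts hy' hx' (by omega)

theorem cardL_of_eq (s : ℕ → ℕ) (y x : ℕ) :
    ∀ cs : List STree, memL y cs = true → memL x cs = true →
      idxOf x cs = idxOf y cs →
      ∃ t ∈ cs, mem x t = true ∧ mem y t = true ∧ cardL s y x cs = card s y x t
  | t :: ts, hy, hx, heq => by
    rw [memL_cons, Bool.or_eq_true] at hy hx
    rw [idxOf_cons, idxOf_cons] at heq
    cases hyt : mem y t with
    | true =>
      cases hxt : mem x t with
      | true =>
        exact ⟨t, List.mem_cons_self, hxt, hyt,
          by rw [cardL_cons]; simp [hxt, hyt]⟩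
      | false => simp [hxt, hyt] at heq
    | false =>
      cases hxt : mem x t with
      | true => simp [hxt, hyt] at heq
      | false =>
        have hy' : memL y ts = true := by simpa [hyt] using hy
        have hx' : memL x ts = true := by simpa [hxt] using hx
        simp only [hxt, hyt, Bool.false_eq_true, if_false] at heq
        obtain ⟨u, hu, h1, h2, h3⟩ := cardL_of_eq s y x ts hy' hx' (by omega)
        exact ⟨u, List.mem_cons_of_mem t hu, h1, h2, by
          rw [cardL_cons]; simp only [hxt, hyt, Bool.false_eq_true, if_false]; exact h3⟩

end STree

namespace STree

theorem labels_subset {t : STree} : ∀ {cs : List STree}, t ∈ cs → labels t ⊆ labelsL cs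
  | u :: ts, h => by
    rw [labelsL_cons]
    rcases List.mem_cons.mp h with h | h
    · subst h; exact List.subset_append_left _ _
    · exact fun x hx => List.subset_append_right _ _ (labels_subset h hx)

theorem memL_of_mem {t : STree} {cs : List STree} {z : ℕ} (ht : t ∈ cs)
    (hz : mem z t = true) : memL z cs = true := by
  rw [memL_iff]
  exact labels_subset ht ((mem_iff z t).mp hz)

theorem nodup_of_memL {t : STree} : ∀ {cs : List STree}, (labelsL cs).Nodup →
    t ∈ cs → (labels t).Nodup
  | u :: ts, hnd, h => by
    rw [labelsL_cons] at hnd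
    rcases List.mem_cons.mp h with h | h
    · subst h; exact hnd.of_append_left
    · exact nodup_of_memL hnd.of_append_right h

theorem mem_unique {z : ℕ} {t1 t2 : STree} : ∀ {cs : List STree}, (labelsL cs).Nodup →
    t1 ∈ cs → t2 ∈ cs → mem z t1 = true → mem z t2 = true → t1 = t2
  | u :: ts, hnd, h1, h2, hz1, hz2 => by
    rw [labelsL_cons] at hnd
    have hdisj := List.disjoint_of_nodup_append hnd
    rcases List.mem_cons.mp h1 with h1 | h1 <;> rcases List.mem_cons.mp h2 with h2 | h2
    · rw [h1, h2]
    · refine absurd (labels_subset h2 ((mem_iff z t2).mp hz2)) (hdisj ?_)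
      rw [← h1]; exact (mem_iff z t1).mp hz1
    · refine absurd (labels_subset h1 ((mem_iff z t1).mp hz1)) (hdisj ?_)
      rw [← h2]; exact (mem_iff z t2).mp hz2
    · exact mem_unique hnd.of_append_right h1 h2 hz1 hz2

theorem card_bound (s : ℕ → ℕ) (y x : ℕ) : ∀ t : STree, wf s t → mem x t = true →
    x < y → card s y x t ≤ s y
  | .leaf, _, hm, _ => by rw [mem_leaf] at hm; exact absurd hm (by simp)
  | .node a cs, hwf, hm, hxy => by
    obtain ⟨hlen, _, hwfL⟩ := hwf
    rw [card_node]
    rw [mem_node, Bool.or_eq_true, beq_iff_eq] at hm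
    by_cases hay : a = y
    · subst hay
      rw [if_pos rfl]
      have hx : memL x cs = true := by
        rcases hm with h | h
        · omega
        · exact h
      have := idxOf_lt_length x cs hx
      omega
    · rw [if_neg hay]
      cases hy : memL y cs with
      | false => rw [cardL_of_not_memy s y x cs hy]; exact Nat.zero_le _
      | true =>
        cases hx : memL x cs with
        | false => rw [cardL_of_not_memx s y x cs hx]; exact Nat.zero_le _
        | true =>
          rcases lt_trichotomy (idxOf x cs) (idxOf y cs) with h | h | h
          · rw [cardL_of_lt s y x cs hx h]; exact Nat.zero_le _
          · obtain ⟨u, hu, hxu, _, hcard⟩ := cardL_of_eq s y x cs hy hx h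
            rw [hcard]
            exact card_bound s y x u ((wfL_iff s cs).mp hwfL u hu) hxu hxy
          · rw [cardL_of_gt s y x cs hy hx h]
termination_by t => sizeOf t
decreasing_by
  have := List.sizeOf_lt_of_mem hu
  simp only [STree.node.sizeOf_spec]
  omega

end STree

namespace STree

theorem card_trans (s : ℕ → ℕ) : ∀ t : STree, wf s t → (labels t).Nodup →
    ∀ a b c : ℕ, a < b → b < c → mem a t = true → mem b t = true → mem c t = true →
    (card s b a t = 0 ∨ card s c b t ≤ card s c a t)
  | .leaf, _, _, a, b, c, _, _, hma, _, _ => by rw [mem_leaf] at hma; simp at hma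
  | .node m cs, hwf, hnd, a, b, c, hab, hbc, hma, hmb, hmc => by
    obtain ⟨hlen, hsm, hwfL⟩ := hwf
    rw [labels_node] at hnd
    have hndL : (labelsL cs).Nodup := hnd.of_cons
    rw [mem_node, Bool.or_eq_true, beq_iff_eq] at hma hmb hmc
    have hblow : ∀ z, memL z cs = true → z < m := fun z hz =>
      hsm z ((memL_iff z cs).mp hz)
    rw [card_node s b a m cs, card_node s c b m cs, card_node s c a m cs]
    by_cases hcm : c = m
    · subst hcm
      have hmb' : memL b cs = true := by
        rcases hmb with h | h
        · omega
        · exact h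
      have hma' : memL a cs = true := by
        rcases hma with h | h
        · omega
        · exact h
      rw [if_pos rfl, if_pos rfl, if_neg (by omega)]
      rcases lt_trichotomy (idxOf a cs) (idxOf b cs) with h | h | h
      · left; exact cardL_of_lt s b a cs hma' h
      · right; omega
      · right; omega
    · have hmc' : memL c cs = true := by
        rcases hmc with h | h
        · exact absurd h hcm
        · exact h
      have hcm' : c < m := hblow c hmc'
      have hmb' : memL b cs = true := by
        rcases hmb with h | h
        · omega
        · exact h
      have hma' : memL a cs = true := by
        rcases hma with h | h
        · omega
        · exact h
      rw [if_neg (by omega), if_neg (by omega), if_neg (by omega)]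
      rcases lt_trichotomy (idxOf b cs) (idxOf c cs) with hjk | hjk | hjk
      · right; rw [cardL_of_lt s c b cs hmb' hjk]; exact Nat.zero_le _
      · rcases lt_trichotomy (idxOf a cs) (idxOf c cs) with hik | hik | hik
        · left; exact cardL_of_lt s b a cs hma' (by omega)
        · obtain ⟨u1, hu1, hbu1, hcu1, h1⟩ := cardL_of_eq s c b cs hmc' hmb' hjk
          obtain ⟨u2, hu2, hau2, hcu2, h2⟩ := cardL_of_eq s c a cs hmc' hma' hik
          obtain ⟨u3, hu3, hau3, hbu3, h3⟩ := cardL_of_eq s b a cs hmb' hma' (by omega)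
          have e12 : u1 = u2 := mem_unique hndL hu1 hu2 hcu1 hcu2
          have e13 : u1 = u3 := mem_unique hndL hu1 hu3 hbu1 hbu3
          rw [h1, h2, h3, ← e12, ← e13]
          exact card_trans s u1 ((wfL_iff s cs).mp hwfL u1 hu1) (nodup_of_memL hndL hu1)
            a b c hab hbc (e13 ▸ hau3) hbu1 hcu1
        · right
          rw [cardL_of_gt s c a cs hmc' hma' hik]
          obtain ⟨u, hu, hbu, _, h1⟩ := cardL_of_eq s c b cs hmc' hmb' hjk
          rw [h1]
          exact card_bound s c b u ((wfL_iff s cs).mp hwfL u hu) hbu hbc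
      · by_cases hik2 : idxOf c cs < idxOf a cs
        · right
          rw [cardL_of_gt s c b cs hmc' hmb' hjk, cardL_of_gt s c a cs hmc' hma' hik2]
        · left; exact cardL_of_lt s b a cs hma' (by omega)
termination_by t => sizeOf t
decreasing_by
  have := List.sizeOf_lt_of_mem hu1
  simp only [STree.node.sizeOf_spec]
  omega

end STree

namespace STree

theorem card_planar (s : ℕ → ℕ) : ∀ t : STree, wf s t → (labels t).Nodup →
    ∀ a b c : ℕ, a < b → b < c → mem a t = true → mem b t = true → mem c t = true →
    (card s b a t = s b ∨ card s c a t ≤ card s c b t)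
  | .leaf, _, _, a, b, c, _, _, hma, _, _ => by rw [mem_leaf] at hma; simp at hma
  | .node m cs, hwf, hnd, a, b, c, hab, hbc, hma, hmb, hmc => by
    obtain ⟨hlen, hsm, hwfL⟩ := hwf
    rw [labels_node] at hnd
    have hndL : (labelsL cs).Nodup := hnd.of_cons
    rw [mem_node, Bool.or_eq_true, beq_iff_eq] at hma hmb hmc
    have hblow : ∀ z, memL z cs = true → z < m := fun z hz =>
      hsm z ((memL_iff z cs).mp hz)
    rw [card_node s b a m cs, card_node s c a m cs, card_node s c b m cs]
    by_cases hcm : c = m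
    · subst hcm
      have hmb' : memL b cs = true := by
        rcases hmb with h | h
        · omega
        · exact h
      have hma' : memL a cs = true := by
        rcases hma with h | h
        · omega
        · exact h
      rw [if_pos rfl, if_pos rfl, if_neg (by omega)]
      by_cases h : idxOf b cs < idxOf a cs
      · left; exact cardL_of_gt s b a cs hmb' hma' h
      · right; omega
    · have hmc' : memL c cs = true := by
        rcases hmc with h | h
        · exact absurd h hcm
        · exact h
      have hcm' : c < m := hblow c hmc'
      have hmb' : memL b cs = true := by
        rcases hmb with h | h
        · omega
        · exact h
      have hma' : memL a cs = true := by
        rcases hma with h | h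
        · omega
        · exact h
      rw [if_neg (by omega), if_neg (by omega), if_neg (by omega)]
      rcases lt_trichotomy (idxOf b cs) (idxOf c cs) with hjk | hjk | hjk
      · -- card c b = 0; need card c a = 0 or card b a = s b
        rcases lt_trichotomy (idxOf a cs) (idxOf b cs) with hij | hij | hij
        · right
          rw [cardL_of_lt s c b cs hmb' hjk, cardL_of_lt s c a cs hma' (by omega)]
        · right
          rw [cardL_of_lt s c b cs hmb' hjk, cardL_of_lt s c a cs hma' (by omega)]
        · left; exact cardL_of_gt s b a cs hmb' hma' hij
      · rcases lt_trichotomy (idxOf a cs) (idxOf c cs) with hik | hik | hik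
        · right
          rw [cardL_of_lt s c a cs hma' hik]
          exact Nat.zero_le _
        · obtain ⟨u1, hu1, hbu1, hcu1, h1⟩ := cardL_of_eq s c b cs hmc' hmb' hjk
          obtain ⟨u2, hu2, hau2, hcu2, h2⟩ := cardL_of_eq s c a cs hmc' hma' hik
          obtain ⟨u3, hu3, hau3, hbu3, h3⟩ := cardL_of_eq s b a cs hmb' hma' (by omega)
          have e12 : u1 = u2 := mem_unique hndL hu1 hu2 hcu1 hcu2
          have e13 : u1 = u3 := mem_unique hndL hu1 hu3 hbu1 hbu3
          rw [h1, h2, h3, ← e12, ← e13]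
          exact card_planar s u1 ((wfL_iff s cs).mp hwfL u1 hu1) (nodup_of_memL hndL hu1)
            a b c hab hbc (e13 ▸ hau3) hbu1 hcu1
        · left
          exact cardL_of_gt s b a cs hmb' hma' (by omega)
      · right
        rw [cardL_of_gt s c b cs hmc' hmb' hjk]
        rcases lt_trichotomy (idxOf a cs) (idxOf c cs) with hik | hik | hik
        · rw [cardL_of_lt s c a cs hma' hik]; exact Nat.zero_le _
        · obtain ⟨u, hu, hau, _, h2⟩ := cardL_of_eq s c a cs hmc' hma' hik
          rw [h2]
          exact card_bound s c a u ((wfL_iff s cs).mp hwfL u hu) hau (by omega)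
        · rw [cardL_of_gt s c a cs hmc' hma' hik]
termination_by t => sizeOf t
decreasing_by
  have := List.sizeOf_lt_of_mem hu1
  simp only [STree.node.sizeOf_spec]
  omega

end STree

namespace STree

theorem treeInv_eq_card {n : ℕ} {s : ℕ → ℕ} {T : STree} {y x : ℕ}
    (h : 1 ≤ x ∧ x < y ∧ y ≤ n) : treeInv n s T y x = card s y x T := if_pos h

theorem treeInv_eq_zero {n : ℕ} {s : ℕ → ℕ} {T : STree} {y x : ℕ}
    (h : ¬(1 ≤ x ∧ x < y ∧ y ≤ n)) : treeInv n s T y x = 0 := if_neg h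

theorem mem_of_sdec {n : ℕ} {s : ℕ → ℕ} {T : STree} (hT : IsSDecreasingTree n s T)
    {z : ℕ} (h1 : 1 ≤ z) (h2 : z ≤ n) : mem z T = true := by
  rw [mem_iff, hT.2.mem_iff, List.mem_range'_1]
  omega

theorem nodup_of_sdec {n : ℕ} {s : ℕ → ℕ} {T : STree} (hT : IsSDecreasingTree n s T) :
    (labels T).Nodup := hT.2.nodup_iff.mpr (List.nodup_range' (s := 1) (n := n))

theorem treeInv_bounded {n : ℕ} {s : ℕ → ℕ} {T : STree} (hT : IsSDecreasingTree n s T) :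
    ∀ y x, treeInv n s T y x ≤ s y := by
  intro y x
  by_cases h : 1 ≤ x ∧ x < y ∧ y ≤ n
  · rw [treeInv_eq_card h]
    exact card_bound s y x T hT.1 (mem_of_sdec hT h.1 (by omega)) h.2.1
  · rw [treeInv_eq_zero h]
    exact Nat.zero_le _

theorem treeInv_trans {n : ℕ} {s : ℕ → ℕ} {T : STree} (hT : IsSDecreasingTree n s T) :
    InvTransitive (treeInv n s T) := by
  intro a b c hab hbc
  by_cases ha : 1 ≤ a
  · by_cases hc : c ≤ n
    · rw [treeInv_eq_card ⟨ha, hab, by omega⟩, treeInv_eq_card ⟨by omega, hbc, hc⟩,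
        treeInv_eq_card ⟨ha, by omega, hc⟩]
      exact card_trans s T hT.1 (nodup_of_sdec hT) a b c hab hbc
        (mem_of_sdec hT ha (by omega)) (mem_of_sdec hT (by omega) (by omega))
        (mem_of_sdec hT (by omega) hc)
    · right
      rw [treeInv_eq_zero (by omega)]
      exact Nat.zero_le _
  · left
    exact treeInv_eq_zero (by omega)

theorem treeInv_planar {n : ℕ} {s : ℕ → ℕ} {T : STree} (hT : IsSDecreasingTree n s T) :
    InvPlanar s (treeInv n s T) := by
  intro a b c hab hbc
  by_cases ha : 1 ≤ a
  · by_cases hc : c ≤ n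
    · rw [treeInv_eq_card ⟨ha, hab, by omega⟩, treeInv_eq_card ⟨ha, by omega, hc⟩,
        treeInv_eq_card ⟨by omega, hbc, hc⟩]
      exact card_planar s T hT.1 (nodup_of_sdec hT) a b c hab hbc
        (mem_of_sdec hT ha (by omega)) (mem_of_sdec hT (by omega) (by omega))
        (mem_of_sdec hT (by omega) hc)
    · right
      rw [treeInv_eq_zero (by omega)]
      exact Nat.zero_le _
  · right
    rw [treeInv_eq_zero (by omega)]
    exact Nat.zero_le _

/-! ### Transitive closure machinery -/

/-- One step of a transitivity path. -/
def Step (U : ℕ → ℕ → ℕ) (u w : ℕ) : Prop := w < u ∧ 0 < U u w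

/-- The set of values over which `tc` takes the supremum. -/
def tcSet (U : ℕ → ℕ → ℕ) (c a : ℕ) : Set ℕ :=
  {v | ∃ (b : ℕ) (l : List ℕ),
    List.Chain (Step U) c (b :: l) ∧
    (b :: l).getLast (List.cons_ne_nil b l) = a ∧ v = U c b}

theorem tc_eq (U : ℕ → ℕ → ℕ) (c a : ℕ) : tc U c a = sSup (tcSet U c a) := rfl

theorem tcSet_bddAbove {s : ℕ → ℕ} {U : ℕ → ℕ → ℕ} (hU : ∀ y x, U y x ≤ s y)
    (c a : ℕ) : BddAbove (tcSet U c a) := by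
  refine ⟨s c, fun v hv => ?_⟩
  obtain ⟨b, l, _, _, rfl⟩ := hv
  exact hU c b

theorem le_tc {s : ℕ → ℕ} {U : ℕ → ℕ → ℕ} (hU : ∀ y x, U y x ≤ s y)
    {c a : ℕ} (h1 : a < c) (h2 : 0 < U c a) : U c a ≤ tc U c a := by
  rw [tc_eq]
  exact le_csSup (tcSet_bddAbove hU c a) ⟨a, [], List.chain_cons.mpr ⟨⟨h1, h2⟩, List.IsChain.singleton _⟩, rfl, rfl⟩

theorem tc_mem {s : ℕ → ℕ} {U : ℕ → ℕ → ℕ} (hU : ∀ y x, U y x ≤ s y)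
    {c a : ℕ} (h : tc U c a ≠ 0) : tc U c a ∈ tcSet U c a := by
  rw [tc_eq] at h ⊢
  by_cases hne : (tcSet U c a).Nonempty
  · exact Nat.sSup_mem hne (tcSet_bddAbove hU c a)
  · rw [Set.not_nonempty_iff_eq_empty.mp hne, csSup_empty] at h
    exact absurd rfl h

theorem tc_le_bound {s : ℕ → ℕ} {U : ℕ → ℕ → ℕ} (hU : ∀ y x, U y x ≤ s y)
    (c a : ℕ) : tc U c a ≤ s c := by
  by_cases h : tc U c a = 0
  · rw [h]; exact Nat.zero_le _
  · obtain ⟨b, l, _, _, hv⟩ := tc_mem hU h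
    rw [hv]
    exact hU c b

theorem chain_lt {U : ℕ → ℕ → ℕ} : ∀ (l : List ℕ) (c : ℕ),
    List.Chain (Step U) c l → ∀ z ∈ l, z < c
  | [], _, _, z, hz => by simp at hz
  | d :: l, c, hch, z, hz => by
    replace hch := List.chain_cons.mp hch
    rcases List.mem_cons.mp hz with h | h
    · subst h; exact hch.1.1
    · exact lt_trans (chain_lt l d hch.2 z h) hch.1.1

theorem chain_ge_one {n : ℕ} {U : ℕ → ℕ → ℕ}
    (hsupp : ∀ y x, 0 < U y x → 1 ≤ x ∧ x < y ∧ y ≤ n) : ∀ (l : List ℕ) (c : ℕ),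
    List.Chain (Step U) c l → ∀ z ∈ l, 1 ≤ z
  | [], _, _, z, hz => by simp at hz
  | d :: l, c, hch, z, hz => by
    replace hch := List.chain_cons.mp hch
    rcases List.mem_cons.mp hz with h | h
    · subst h; exact (hsupp c z hch.1.2).1
    · exact chain_ge_one hsupp l d hch.2 z h

theorem tc_supp {n : ℕ} {s : ℕ → ℕ} {U : ℕ → ℕ → ℕ} (hU : ∀ y x, U y x ≤ s y)
    (hsupp : ∀ y x, 0 < U y x → 1 ≤ x ∧ x < y ∧ y ≤ n) :
    ∀ c a, ¬(1 ≤ a ∧ a < c ∧ c ≤ n) → tc U c a = 0 := by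
  intro c a hg
  by_contra h
  obtain ⟨b, l, hch, hl, hv⟩ := tc_mem hU h
  have hmem : a ∈ b :: l := hl ▸ List.getLast_mem _
  have h1 : 1 ≤ a := chain_ge_one hsupp (b :: l) c hch a hmem
  have h2 : a < c := chain_lt (b :: l) c hch a hmem
  have hcb : 0 < U c b := (List.chain_cons.mp hch).1.2
  have h3 : c ≤ n := (hsupp c b hcb).2.2
  exact hg ⟨h1, h2, h3⟩

end STree

namespace STree

theorem chain_append {R : ℕ → ℕ → Prop} : ∀ (l : List ℕ) (x y : ℕ) (m : List ℕ)
    (h : l ≠ []), List.Chain R x l → l.getLast h = y → List.Chain R y m →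
    List.Chain R x (l ++ m)
  | [z], x, y, m, _, hch, hl, hcm => by
    replace hch := List.chain_cons.mp hch
    have : z = y := hl
    subst this
    exact List.chain_cons.mpr ⟨hch.1, hcm⟩
  | z :: w :: zs, x, y, m, _, hch, hl, hcm => by
    replace hch := List.chain_cons.mp hch
    rw [List.getLast_cons (by simp : w :: zs ≠ [])] at hl
    exact List.chain_cons.mpr ⟨hch.1, chain_append (w :: zs) z y m (by simp) hch.2 hl hcm⟩

theorem tc_transitive {s : ℕ → ℕ} {U : ℕ → ℕ → ℕ} (hU : ∀ y x, U y x ≤ s y) :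
    InvTransitive (tc U) := by
  intro a b c _ _
  by_cases h1 : tc U b a = 0
  · left; exact h1
  right
  by_cases h2 : tc U c b = 0
  · rw [h2]; exact Nat.zero_le _
  obtain ⟨d, l, hch, hl, hv⟩ := tc_mem hU h2
  obtain ⟨e, l2, hch2, hl2, hv2⟩ := tc_mem hU h1
  rw [hv]
  have hchain : List.Chain (Step U) c ((d :: l) ++ (e :: l2)) :=
    chain_append _ c b _ (by simp) hch hl hch2
  refine le_csSup (tcSet_bddAbove hU c a) ⟨d, l ++ e :: l2, hchain, ?_, rfl⟩
  show ((d :: l) ++ (e :: l2)).getLast (by simp) = a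
  rw [List.getLast_append_of_ne_nil _ (by simp : e :: l2 ≠ [])]
  exact hl2

/-- The key rerouting lemma: along any transitivity path from `e` to `a`, and
any `b` with `a ≤ b < e`, either `b` is reachable from `e`, or `tc U b a` is
full. -/
theorem reach {s : ℕ → ℕ} {U : ℕ → ℕ → ℕ} (hU : ∀ y x, U y x ≤ s y)
    (hW : ∀ e d, 0 < U e d → ∃ W, InvPlanar s W ∧ (∀ y x, W y x ≤ U y x) ∧ W e d = U e d) :
    ∀ (l : List ℕ) (d e a b : ℕ), List.Chain (Step U) e (d :: l) →
      (d :: l).getLast (by simp) = a → a ≤ b → b < e →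
      (∃ (m : ℕ) (l' : List ℕ), List.Chain (Step U) e (m :: l') ∧
        (m :: l').getLast (by simp) = b) ∨ s b ≤ tc U b a
  | [], d, e, a, b, hch, hl, hab, hbe => by
    have hda : d = a := hl
    subst hda
    replace hch := List.chain_cons.mp hch
    rcases Nat.lt_or_ge d b with hdb | hdb
    · -- crossing at the step e → d
      obtain ⟨W, hWp, hWle, hWeq⟩ := hW e d hch.1.2
      rcases hWp d b e hdb hbe with h | h
      · -- W b d = s b
        right
        rcases Nat.eq_zero_or_pos (s b) with hs | hs
        · rw [hs]; exact Nat.zero_le _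
        have hUbd : 0 < U b d := lt_of_lt_of_le (h ▸ hs) (hWle b d)
        calc s b = W b d := h.symm
          _ ≤ U b d := hWle b d
          _ ≤ tc U b d := le_tc hU hdb hUbd
      · -- reroute : step e → b
        left
        have hUeb : 0 < U e b := lt_of_lt_of_le (lt_of_lt_of_le (hWeq ▸ hch.1.2) h) (hWle e b)
        exact ⟨b, [], List.chain_cons.mpr ⟨⟨hbe, hUeb⟩, List.IsChain.singleton _⟩, rfl⟩
    · -- b ≤ d : b = d since also d = a ≤ b
      have : d = b := by omega
      subst this
      left
      exact ⟨d, [], List.chain_cons.mpr ⟨⟨hbe, hch.1.2⟩, List.IsChain.singleton _⟩, rfl⟩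
  | d' :: l', d, e, a, b, hch, hl, hab, hbe => by
    replace hch := List.chain_cons.mp hch
    rw [List.getLast_cons (by simp : d' :: l' ≠ [])] at hl
    rcases lt_trichotomy d b with hdb | hdb | hdb
    · -- crossing at the step e → d
      obtain ⟨W, hWp, hWle, hWeq⟩ := hW e d hch.1.2
      rcases hWp d b e hdb hbe with h | h
      · right
        rcases Nat.eq_zero_or_pos (s b) with hs | hs
        · rw [hs]; exact Nat.zero_le _
        have hUbd : 0 < U b d := lt_of_lt_of_le (h ▸ hs) (hWle b d)
        have hchain : List.Chain (Step U) b (d :: d' :: l') :=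
          List.chain_cons.mpr ⟨⟨hdb, hUbd⟩, hch.2⟩
        have : U b d ≤ tc U b a :=
          le_csSup (tcSet_bddAbove hU b a) ⟨d, d' :: l', hchain, by
            rw [List.getLast_cons (by simp : d' :: l' ≠ [])]; exact hl, rfl⟩
        calc s b = W b d := h.symm
          _ ≤ U b d := hWle b d
          _ ≤ tc U b a := this
      · left
        have hUeb : 0 < U e b := lt_of_lt_of_le (lt_of_lt_of_le (hWeq ▸ hch.1.2) h) (hWle e b)
        exact ⟨b, [], List.chain_cons.mpr ⟨⟨hbe, hUeb⟩, List.IsChain.singleton _⟩, rfl⟩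
    · subst hdb
      left
      exact ⟨d, [], List.chain_cons.mpr ⟨⟨hbe, hch.1.2⟩, List.IsChain.singleton _⟩, rfl⟩
    · -- recurse into the tail
      rcases reach hU hW l' d' d a b hch.2 hl hab hdb with ⟨m, l'', hch'', hl''⟩ | h
      · left
        exact ⟨d, m :: l'', List.chain_cons.mpr ⟨hch.1, hch''⟩, by
          rw [List.getLast_cons (by simp : m :: l'' ≠ [])]; exact hl''⟩
      · right; exact h

theorem tc_planar {s : ℕ → ℕ} {U : ℕ → ℕ → ℕ} (hU : ∀ y x, U y x ≤ s y)
    (hW : ∀ e d, 0 < U e d → ∃ W, InvPlanar s W ∧ (∀ y x, W y x ≤ U y x) ∧ W e d = U e d) :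
    InvPlanar s (tc U) := by
  intro a b c hab hbc
  by_cases h0 : tc U c a = 0
  · right; rw [h0]; exact Nat.zero_le _
  obtain ⟨d, l, hch, hl, hv⟩ := tc_mem hU h0
  have hch' := List.chain_cons.mp hch
  rcases lt_trichotomy d b with hdb | hdb | hdb
  · -- crossing at the first step c → d
    obtain ⟨W, hWp, hWle, hWeq⟩ := hW c d hch'.1.2
    rcases hWp d b c hdb hbc with h | h
    · -- tc U b a = s b
      left
      rcases Nat.eq_zero_or_pos (s b) with hs | hs
      · -- then W b d = 0 but also need tc U b a = 0 ≤ ... : tc U b a ≤ s b = 0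
        have := tc_le_bound hU b a
        omega
      have hUbd : 0 < U b d := lt_of_lt_of_le (h ▸ hs) (hWle b d)
      have hge : s b ≤ tc U b a := by
        rcases l with _ | ⟨d', l'⟩
        · -- path is c :: [d], so a = d
          have hda : d = a := hl
          subst hda
          calc s b = W b d := h.symm
            _ ≤ U b d := hWle b d
            _ ≤ tc U b d := le_tc hU hdb hUbd
        · have hlast : (d' :: l').getLast (by simp) = a := by
            rw [List.getLast_cons (by simp : d' :: l' ≠ [])] at hl; exact hl
          have hchain : List.Chain (Step U) b (d :: d' :: l') :=
            List.chain_cons.mpr ⟨⟨hdb, hUbd⟩, hch'.2⟩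
          have : U b d ≤ tc U b a :=
            le_csSup (tcSet_bddAbove hU b a) ⟨d, d' :: l', hchain, by
              rw [List.getLast_cons (by simp : d' :: l' ≠ [])]; exact hlast, rfl⟩
          calc s b = W b d := h.symm
            _ ≤ U b d := hWle b d
            _ ≤ tc U b a := this
      have hle := tc_le_bound hU b a
      omega
    · -- reroute at first step
      right
      have hUcb : 0 < U c b := lt_of_lt_of_le (lt_of_lt_of_le (hWeq ▸ hch'.1.2) h) (hWle c b)
      calc tc U c a = U c d := hv
        _ = W c d := hWeq.symm
        _ ≤ W c b := h
        _ ≤ U c b := hWle c b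
        _ ≤ tc U c b := le_tc hU hbc hUcb
  · -- d = b : prefix path
    subst hdb
    right
    rw [hv]
    exact le_csSup (tcSet_bddAbove hU c d) ⟨d, [], List.chain_cons.mpr ⟨hch'.1, List.IsChain.singleton _⟩, rfl, rfl⟩
  · -- d > b : use reach on the tail
    rcases l with _ | ⟨d', l'⟩
    · -- then a = d > b, contradiction with getLast
      have hda : d = a := hl
      omega
    have hlast : (d' :: l').getLast (by simp) = a := by
      rw [List.getLast_cons (by simp : d' :: l' ≠ [])] at hl; exact hl
    rcases reach hU hW l' d' d a b hch'.2 hlast (by omega) hdb with ⟨m, l'', hch'', hl''⟩ | h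
    · right
      rw [hv]
      exact le_csSup (tcSet_bddAbove hU c b)
        ⟨d, m :: l'', List.chain_cons.mpr ⟨hch'.1, hch''⟩, by
          rw [List.getLast_cons (by simp : m :: l'' ≠ [])]; exact hl'', rfl⟩
    · left
      have hle := tc_le_bound hU b a
      omega

/-- Monotone transitive sets absorb the transitive closure. -/
theorem tc_le_of_transitive {s : ℕ → ℕ} {U V : ℕ → ℕ → ℕ} (hU : ∀ y x, U y x ≤ s y)
    (hUV : ∀ y x, U y x ≤ V y x) (hV : InvTransitive V) :
    ∀ c a, tc U c a ≤ V c a := by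
  have desc : ∀ (l : List ℕ) (b c a : ℕ), b < c → List.Chain (Step U) b l →
      (b :: l).getLast (by simp) = a → V c b ≤ V c a := by
    intro l
    induction l with
    | nil =>
      intro b c a _ _ hl
      have : b = a := hl
      subst this; exact le_refl _
    | cons e l' ih =>
      intro b c a hbc hch hl
      replace hch := List.chain_cons.mp hch
      have h1 : V c b ≤ V c e := by
        rcases hV e b c hch.1.1 hbc with h | h
        · exact absurd h (by have := lt_of_lt_of_le hch.1.2 (hUV b e); omega)
        · exact h
      refine le_trans h1 (ih e c a (lt_trans hch.1.1 hbc) hch.2 ?_)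
      rw [List.getLast_cons (by simp : e :: l' ≠ [])] at hl
      exact hl
  intro c a
  by_cases h : tc U c a = 0
  · rw [h]; exact Nat.zero_le _
  obtain ⟨b, l, hch, hl, hv⟩ := tc_mem hU h
  have hch' := List.chain_cons.mp hch
  rw [hv]
  exact le_trans (hUV c b) (desc l b c a hch'.1.1 hch'.2 (by
    rw [show (b :: l).getLast (by simp) = a from hl]))

end STree

namespace STree

theorem labelsL_map_mem (f : ℕ → STree) (z : ℕ) : ∀ l : List ℕ,
    (z ∈ labelsL (l.map f) ↔ ∃ i ∈ l, z ∈ labels (f i))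
  | [] => by simp [labelsL_nil]
  | i :: l => by
    simp only [List.map_cons, labelsL_cons, List.mem_append, labelsL_map_mem f z l,
      List.mem_cons]
    constructor
    · rintro (h | ⟨j, hj, hz⟩)
      · exact ⟨i, Or.inl rfl, h⟩
      · exact ⟨j, Or.inr hj, hz⟩
    · rintro ⟨j, (rfl | hj), hz⟩
      · exact Or.inl hz
      · exact Or.inr ⟨j, hj, hz⟩

theorem labelsL_map_nodup (f : ℕ → STree) : ∀ l : List ℕ,
    (∀ i ∈ l, (labels (f i)).Nodup) →
    List.Pairwise (fun i j => ∀ z, z ∈ labels (f i) → z ∉ labels (f j)) l →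
    (labelsL (l.map f)).Nodup
  | [], _, _ => by simp [labelsL_nil]
  | i :: l, hnd, hpw => by
    rw [List.map_cons, labelsL_cons]
    rw [List.pairwise_cons] at hpw
    refine List.Nodup.append (hnd i (by simp)) (labelsL_map_nodup f l ?_ hpw.2) ?_
    · exact fun j hj => hnd j (by simp [hj])
    · intro z hz hz'
      obtain ⟨j, hj, hzj⟩ := (labelsL_map_mem f z l).mp hz'
      exact hpw.1 j hj z hz hzj

theorem idxOf_map_range' (g : ℕ → STree) (z : ℕ) : ∀ (k b i : ℕ), b ≤ i → i < b + k →
    (∀ j, b ≤ j → j < b + k → (mem z (g j) = true ↔ j = i)) →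
    idxOf z ((List.range' b k).map g) = i - b
  | 0, b, i, h1, h2, _ => by omega
  | k + 1, b, i, h1, h2, hj => by
    rw [List.range'_succ, List.map_cons, idxOf_cons]
    by_cases hb : b = i
    · rw [if_pos ((hj b (le_refl b) (by omega)).mpr hb)]
      omega
    · rw [if_neg (by rw [hj b (le_refl b) (by omega)]; exact hb)]
      rw [idxOf_map_range' g z k (b+1) i (by omega) (by omega)
        (fun j hj1 hj2 => hj j (by omega) (by omega))]
      omega

/-- Build an `s`-decreasing tree on the label set `A` realizing a given
transitive planar bounded inversion set. -/
theorem build (s : ℕ → ℕ) (K : ℕ → ℕ → ℕ) (hb : ∀ y x, K y x ≤ s y)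
    (htr : InvTransitive K) (hpl : InvPlanar s K) :
    ∀ (N : ℕ) (A : Finset ℕ), A.card ≤ N →
      ∃ t : STree, wf s t ∧ (labels t).Nodup ∧ (∀ z, z ∈ labels t ↔ z ∈ A) ∧
        (∀ y x, x ∈ A → y ∈ A → x < y → card s y x t = K y x) := by
  intro N
  induction N with
  | zero =>
    intro A hA
    have : A = ∅ := Finset.card_eq_zero.mp (by omega)
    subst this
    exact ⟨.leaf, trivial, by simp [labels_leaf], by simp [labels_leaf], by simp⟩
  | succ N ih =>
    intro A hA
    rcases Finset.eq_empty_or_nonempty A with rfl | hne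
    · exact ⟨.leaf, trivial, by simp [labels_leaf], by simp [labels_leaf], by simp⟩
    set m := A.max' hne with hm
    have hmA : m ∈ A := A.max'_mem hne
    set A' := A.erase m with hA'
    have hA'lt : ∀ z ∈ A', z < m := by
      intro z hz
      have h1 := Finset.mem_of_mem_erase hz
      have h2 := Finset.ne_of_mem_erase hz
      have := A.le_max' z h1
      omega
    set B := fun i => A'.filter (fun x => K m x = i) with hB
    have hBsub : ∀ i, ∀ z ∈ B i, z ∈ A' ∧ K m z = i := by
      intro i z hz
      exact Finset.mem_filter.mp hz
    have hBmem : ∀ z ∈ A', z ∈ B (K m z) := by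
      intro z hz
      exact Finset.mem_filter.mpr ⟨hz, rfl⟩
    have hcard : ∀ i, (B i).card ≤ N := by
      intro i
      have h1 : (B i).card ≤ A'.card := Finset.card_le_card (Finset.filter_subset _ _)
      have h2 : A'.card = A.card - 1 := Finset.card_erase_of_mem hmA
      have h3 : 1 ≤ A.card := Finset.card_pos.mpr hne
      omega
    choose f hf using fun i => ih (B i) (hcard i)
    set cs := (List.range (s m + 1)).map f with hcs
    have hmemf : ∀ i z, mem z (f i) = true ↔ z ∈ B i := by
      intro i z
      rw [mem_iff, (hf i).2.2.1]
    have hmemcs : ∀ z, z ∈ labelsL cs ↔ z ∈ A' := by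
      intro z
      rw [hcs, labelsL_map_mem]
      constructor
      · rintro ⟨i, _, hz⟩
        exact ((hBsub i z ((hf i).2.2.1 z |>.mp hz)).1)
      · intro hz
        refine ⟨K m z, ?_, ((hf (K m z)).2.2.1 z).mpr (hBmem z hz)⟩
        rw [List.mem_range]
        have := hb m z
        omega
    have hmemLcs : ∀ z, memL z cs = true ↔ z ∈ A' := by
      intro z
      rw [memL_iff]
      exact hmemcs z
    have hidx : ∀ z ∈ A', idxOf z cs = K m z := by
      intro z hz
      have hKz : K m z < s m + 1 := by have := hb m z; omega
      have := idxOf_map_range' f z (s m + 1) 0 (K m z) (by omega) (by omega)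
        (fun j _ hj2 => by
          rw [hmemf j z]
          constructor
          · intro h; exact ((hBsub j z h).2).symm ▸ rfl
          · rintro rfl; exact hBmem z hz)
      rw [← List.range_eq_range'] at this
      rw [hcs]
      omega
    refine ⟨.node m cs, ?_, ?_, ?_, ?_⟩
    · -- wf
      refine ⟨by rw [hcs]; simp, ?_, ?_⟩
      · intro b hbmem
        exact hA'lt b ((hmemcs b).mp hbmem)
      · rw [wfL_iff]
        intro t ht
        obtain ⟨i, _, rfl⟩ := List.mem_map.mp ht
        exact (hf i).1
    · -- nodup
      rw [labels_node]
      refine List.Nodup.cons ?_ ?_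
      · intro hmem
        have := (hmemcs m).mp hmem
        exact absurd rfl (Finset.ne_of_mem_erase this)
      · rw [hcs]
        refine labelsL_map_nodup f _ (fun i _ => (hf i).2.1) ?_
        have : ∀ i j : ℕ, i ≠ j → ∀ z, z ∈ labels (f i) → z ∉ labels (f j) := by
          intro i j hij z hzi hzj
          have h1 := (hBsub i z ((hf i).2.2.1 z |>.mp hzi)).2
          have h2 := (hBsub j z ((hf j).2.2.1 z |>.mp hzj)).2
          omega
        exact (List.nodup_range).imp (fun h => this _ _ h)
    · -- labels iff
      intro z
      rw [labels_node, List.mem_cons, hmemcs z]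
      constructor
      · rintro (rfl | h)
        · exact hmA
        · exact Finset.mem_of_mem_erase h
      · intro hz
        by_cases hzm : z = m
        · exact Or.inl hzm
        · exact Or.inr (Finset.mem_erase.mpr ⟨hzm, hz⟩)
    · -- card values
      intro y x hx hy hxy
      have hxm : x < y → y ≤ m → x ≠ m := by omega
      rw [card_node]
      by_cases hym : m = y
      · rw [if_pos hym]
        subst hym
        have hx' : x ∈ A' := Finset.mem_erase.mpr ⟨by omega, hx⟩
        exact hidx x hx'
      · rw [if_neg hym]
        have hy' : y ∈ A' := Finset.mem_erase.mpr ⟨fun h => hym h.symm, hy⟩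
        have hylt : y < m := hA'lt y hy'
        have hx' : x ∈ A' := Finset.mem_erase.mpr ⟨by omega, hx⟩
        have hix : idxOf x cs = K m x := hidx x hx'
        have hiy : idxOf y cs = K m y := hidx y hy'
        have hmx : memL x cs = true := (hmemLcs x).mpr hx'
        have hmy : memL y cs = true := (hmemLcs y).mpr hy'
        rcases lt_trichotomy (idxOf x cs) (idxOf y cs) with h | h | h
        · rw [cardL_of_lt s y x cs hmx h]
          rcases htr x y m hxy hylt with h0 | h0
          · exact h0.symm
          · omega
        · obtain ⟨u, hu, hxu, hyu, hcard⟩ := cardL_of_eq s y x cs hmy hmx h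
          rw [hcard]
          obtain ⟨i, _, rfl⟩ := List.mem_map.mp hu
          have hxB := (hf i).2.2.1 x |>.mp ((mem_iff x _).mp hxu)
          have hyB := (hf i).2.2.1 y |>.mp ((mem_iff y _).mp hyu)
          exact (hf i).2.2.2 y x hxB hyB hxy
        · rw [cardL_of_gt s y x cs hmy hmx h]
          rcases hpl x y m hxy hylt with h0 | h0
          · exact h0.symm
          · omega

end STree

namespace STree

theorem treeInv_pos_guard {n : ℕ} {s : ℕ → ℕ} {T : STree} {y x : ℕ}
    (h : treeInv n s T y x ≠ 0) : 1 ≤ x ∧ x < y ∧ y ≤ n := by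
  by_contra hg
  exact h (treeInv_eq_zero hg)

theorem join_exists (n : ℕ) (s : ℕ → ℕ) (T R : STree)
    (hT : IsSDecreasingTree n s T) (hR : IsSDecreasingTree n s R) :
    ∃ J : STree, IsSDecreasingTree n s J ∧
      treeInv n s J = tc (invUnion (treeInv n s T) (treeInv n s R)) ∧
      sWeakLE n s T J ∧ sWeakLE n s R J ∧
      (∀ K : STree, IsSDecreasingTree n s K →
        sWeakLE n s T K → sWeakLE n s R K → sWeakLE n s J K) := by
  set U := invUnion (treeInv n s T) (treeInv n s R) with hU
  have hUb : ∀ y x, U y x ≤ s y := fun y x =>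
    max_le (treeInv_bounded hT y x) (treeInv_bounded hR y x)
  have hUsupp : ∀ y x, 0 < U y x → 1 ≤ x ∧ x < y ∧ y ≤ n := by
    intro y x h
    rcases Nat.lt_or_ge 0 (treeInv n s T y x) with h1 | h1
    · exact treeInv_pos_guard (T := T) (Nat.pos_iff_ne_zero.mp h1)
    · have h2 : 0 < treeInv n s R y x := by
        have : U y x = max (treeInv n s T y x) (treeInv n s R y x) := rfl
        omega
      exact treeInv_pos_guard (T := R) (Nat.pos_iff_ne_zero.mp h2)
  have hW : ∀ e d, 0 < U e d → ∃ W, InvPlanar s W ∧ (∀ y x, W y x ≤ U y x) ∧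
      W e d = U e d := by
    intro e d _
    rcases le_total (treeInv n s R e d) (treeInv n s T e d) with h | h
    · exact ⟨treeInv n s T, treeInv_planar hT, fun y x => le_max_left _ _,
        (max_eq_left h).symm⟩
    · exact ⟨treeInv n s R, treeInv_planar hR, fun y x => le_max_right _ _,
        (max_eq_right h).symm⟩
  set K := tc U with hK
  have hKb : ∀ y x, K y x ≤ s y := fun y x => tc_le_bound hUb y x
  have hKsupp : ∀ c a, ¬(1 ≤ a ∧ a < c ∧ c ≤ n) → K c a = 0 := tc_supp hUb hUsupp
  have hKtr : InvTransitive K := tc_transitive hUb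
  have hKpl : InvPlanar s K := tc_planar hUb hW
  -- build the tree
  set A := (List.range' 1 n).toFinset with hA
  have hAmem : ∀ z, z ∈ A ↔ (1 ≤ z ∧ z < 1 + n) := by
    intro z
    rw [hA, List.mem_toFinset, List.mem_range'_1]
  obtain ⟨J, hwf, hnd, hmem, hcard⟩ := build s K hKb hKtr hKpl A.card A (le_refl _)
  have hJsdec : IsSDecreasingTree n s J := by
    refine ⟨hwf, ?_⟩
    refine List.perm_of_nodup_nodup_toFinset_eq hnd (List.nodup_range' (s := 1) (n := n)) ?_
    ext z
    rw [List.mem_toFinset, hmem z, hA, List.mem_toFinset]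
  have hJinv : treeInv n s J = K := by
    funext y x
    by_cases hg : 1 ≤ x ∧ x < y ∧ y ≤ n
    · rw [treeInv_eq_card hg]
      exact hcard y x ((hAmem x).mpr (by omega)) ((hAmem y).mpr (by omega)) hg.2.1
    · rw [treeInv_eq_zero hg, hKsupp y x hg]
  have hTle : sWeakLE n s T J := by
    intro y x
    rw [hJinv]
    by_cases h : treeInv n s T y x = 0
    · rw [h]; exact Nat.zero_le _
    · have hguard := treeInv_pos_guard h
      have h1 : treeInv n s T y x ≤ U y x := le_max_left _ _
      have h2 : 0 < U y x := by omega
      exact le_trans h1 (le_tc hUb hguard.2.1 h2)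
  have hRle : sWeakLE n s R J := by
    intro y x
    rw [hJinv]
    by_cases h : treeInv n s R y x = 0
    · rw [h]; exact Nat.zero_le _
    · have hguard := treeInv_pos_guard h
      have h1 : treeInv n s R y x ≤ U y x := le_max_right _ _
      have h2 : 0 < U y x := by omega
      exact le_trans h1 (le_tc hUb hguard.2.1 h2)
  refine ⟨J, hJsdec, hJinv, hTle, hRle, ?_⟩
  intro P hP hTP hRP y x
  rw [hJinv]
  exact tc_le_of_transitive hUb (fun y x => max_le (hTP y x) (hRP y x))
    (treeInv_trans hP) y x

theorem min_exists (n : ℕ) (s : ℕ → ℕ) :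
    ∃ M : STree, IsSDecreasingTree n s M ∧ ∀ y x, treeInv n s M y x = 0 := by
  obtain ⟨M, hwf, hnd, hmem, hcard⟩ := build s (fun _ _ => 0) (fun _ _ => Nat.zero_le _)
    (fun _ _ _ _ _ => Or.inl rfl) (fun _ _ _ _ _ => Or.inr (le_refl _))
    ((List.range' 1 n).toFinset.card) ((List.range' 1 n).toFinset) (le_refl _)
  have hAmem : ∀ z, z ∈ (List.range' 1 n).toFinset ↔ (1 ≤ z ∧ z < 1 + n) := by
    intro z
    rw [List.mem_toFinset, List.mem_range'_1]
  refine ⟨M, ⟨hwf, ?_⟩, ?_⟩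
  · refine List.perm_of_nodup_nodup_toFinset_eq hnd (List.nodup_range' (s := 1) (n := n)) ?_
    ext z
    rw [List.mem_toFinset, hmem z, List.mem_toFinset]
  · intro y x
    by_cases hg : 1 ≤ x ∧ x < y ∧ y ≤ n
    · rw [treeInv_eq_card hg]
      exact hcard y x ((hAmem x).mpr (by omega)) ((hAmem y).mpr (by omega)) hg.2.1
    · exact treeInv_eq_zero hg

end STree

namespace STree

theorem meet_exists (n : ℕ) (s : ℕ → ℕ) (T R : STree)
    (hT : IsSDecreasingTree n s T) (hR : IsSDecreasingTree n s R) :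
    ∃ M : STree, IsSDecreasingTree n s M ∧
      sWeakLE n s M T ∧ sWeakLE n s M R ∧
      (∀ K : STree, IsSDecreasingTree n s K →
        sWeakLE n s K T → sWeakLE n s K R → sWeakLE n s K M) := by
  classical
  set S : Set (ℕ → ℕ → ℕ) := {g | ∃ P : STree, IsSDecreasingTree n s P ∧
    sWeakLE n s P T ∧ sWeakLE n s P R ∧ g = treeInv n s P} with hS
  have hSfin : S.Finite := by
    set Bm := (Finset.range (n+1)).sup s with hBm
    set φ : (ℕ → ℕ → ℕ) → (Fin (n+1) → Fin (n+1) → Fin (Bm+1)) :=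
      fun g y x => ⟨min (g y.1 x.1) Bm, by omega⟩ with hφ
    refine Set.Finite.of_finite_image (f := φ) (Set.toFinite _) ?_
    intro g1 hg1 g2 hg2 heq
    obtain ⟨P1, hP1, _, _, rfl⟩ := hg1
    obtain ⟨P2, hP2, _, _, rfl⟩ := hg2
    funext y x
    by_cases hyx : y ≤ n ∧ x ≤ n
    · have e := congrFun (congrFun heq ⟨y, by omega⟩) ⟨x, by omega⟩
      rw [hφ] at e
      simp only [Fin.mk.injEq] at e
      have hsy : s y ≤ Bm := Finset.le_sup (Finset.mem_range.mpr (by omega))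
      have b1 : treeInv n s P1 y x ≤ Bm := le_trans (treeInv_bounded hP1 y x) hsy
      have b2 : treeInv n s P2 y x ≤ Bm := le_trans (treeInv_bounded hP2 y x) hsy
      rw [min_eq_left b1, min_eq_left b2] at e
      exact e
    · rw [treeInv_eq_zero (by omega), treeInv_eq_zero (by omega)]
  have claim : ∀ F : Finset (ℕ → ℕ → ℕ), ↑F ⊆ S →
      ∃ M : STree, IsSDecreasingTree n s M ∧ sWeakLE n s M T ∧ sWeakLE n s M R ∧
        ∀ g ∈ F, invLE g (treeInv n s M) := by
    intro F
    induction F using Finset.induction_on with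
    | empty =>
      intro _
      obtain ⟨M0, hM0, hz⟩ := min_exists n s
      exact ⟨M0, hM0, fun y x => by rw [hz]; exact Nat.zero_le _,
        fun y x => by rw [hz]; exact Nat.zero_le _, by simp⟩
    | insert g F hgF ih =>
      intro hsub
      have hgS : g ∈ S := hsub (Finset.mem_insert_self g F)
      obtain ⟨M, hM, hMT, hMR, hMF⟩ := ih (fun g' hg' =>
        hsub (Finset.mem_insert_of_mem hg'))
      obtain ⟨P, hP, hPT, hPR, rfl⟩ := hgS
      obtain ⟨J, hJ, _, hPJ, hMJ, hJmin⟩ := join_exists n s P M hP hM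
      refine ⟨J, hJ, hJmin T hT hPT hMT, hJmin R hR hPR hMR, ?_⟩
      intro g' hg'
      rcases Finset.mem_insert.mp hg' with rfl | hg'
      · exact hPJ
      · exact fun y x => le_trans (hMF g' hg' y x) (hMJ y x)
  obtain ⟨M, hM, hMT, hMR, hMmax⟩ := claim hSfin.toFinset
    (fun g hg => (Set.Finite.mem_toFinset _).mp hg)
  refine ⟨M, hM, hMT, hMR, ?_⟩
  intro K hK hKT hKR
  exact hMmax (treeInv n s K) ((Set.Finite.mem_toFinset _).mpr ⟨K, hK, hKT, hKR, rfl⟩)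

end STree

open STree in
/-- The `s`-weak order on `s`-decreasing trees is a lattice: every pair of
trees has a least upper bound `J`, with `inv J = tc (inv T ∪ inv R)`, and a
greatest lower bound. -/
theorem sWeak_lattice (n : ℕ) (s : ℕ → ℕ) :
    ∀ T R : STree, IsSDecreasingTree n s T → IsSDecreasingTree n s R →
      (∃ J : STree, IsSDecreasingTree n s J ∧
        treeInv n s J = tc (invUnion (treeInv n s T) (treeInv n s R)) ∧
        sWeakLE n s T J ∧ sWeakLE n s R J ∧
        (∀ K : STree, IsSDecreasingTree n s K →
          sWeakLE n s T K → sWeakLE n s R K → sWeakLE n s J K)) ∧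
      (∃ M : STree, IsSDecreasingTree n s M ∧
        sWeakLE n s M T ∧ sWeakLE n s M R ∧
        (∀ K : STree, IsSDecreasingTree n s K →
          sWeakLE n s K T → sWeakLE n s K R → sWeakLE n s K M)) := by
  intro T R hT hR
  exact ⟨join_exists n s T R hT hR, meet_exists n s T R hT hR⟩
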